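/- arXiv:1310.6608 — 3 statements merged into one kernel-verified Lean document; each statement's English description precedes it below -/
import Mathlib

section
/- Let m, n, t be natural numbers with n > 0 and m = t² + 1. If there exist integers x, y with |x² − m·y²| = n and n < 2t, then n is a perfect square. -/
/-- Descent lemma: strong induction on a bound for `|y|`. -/
lemma davenport_aux (n t : ℕ) (hn : 0 < n) (hlt : n < 2 * t) :
    ∀ Y : ℕ, ∀ x y : ℤ, y.natAbs ≤ Y →
      |x ^ 2 - ((t : ℤ) ^ 2 + 1) * y ^ 2| = (n : ℤ) → ∃ k : ℤ, (n : ℤ) = k ^ 2 := by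
  intro Y
  induction Y with
  | zero =>
    intro x y hy hxy
    have hy0 : y = 0 := by
      have h := Nat.le_zero.mp hy
      exact Int.natAbs_eq_zero.mp h
    subst hy0
    refine ⟨x, ?_⟩
    have : |x ^ 2| = (n : ℤ) := by simpa using hxy
    rw [abs_of_nonneg (sq_nonneg x)] at this
    exact this.symm
  | succ Y ih =>
    intro x y hy hxy
    by_cases hy0 : y = 0
    · subst hy0
      refine ⟨x, ?_⟩
      have : |x ^ 2| = (n : ℤ) := by simpa using hxy
      rw [abs_of_nonneg (sq_nonneg x)] at this
      exact this.symm
    · -- replace x, y by their absolute values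
      set a : ℤ := |x| with ha
      set b : ℤ := |y| with hb
      have ha0 : 0 ≤ a := abs_nonneg x
      have hb1 : 1 ≤ b := by
        have : 0 < b := abs_pos.mpr hy0
        omega
      have hab : |a ^ 2 - ((t : ℤ) ^ 2 + 1) * b ^ 2| = (n : ℤ) := by
        rwa [ha, hb, sq_abs, sq_abs]
      have ht1 : 1 ≤ (t : ℤ) := by
        have : 0 < t := by omega
        exact_mod_cast this
      have hnlt : (n : ℤ) < 2 * t := by exact_mod_cast hlt
      have hn1 : (1 : ℤ) ≤ (n : ℤ) := by exact_mod_cast hn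
      -- bounds on d := a² - (t²+1) b²
      have hdlt : a ^ 2 - ((t : ℤ) ^ 2 + 1) * b ^ 2 < 2 * t := by
        have := abs_le.mp hab.le
        linarith [this.2]
      have hdgt : -(2 * (t : ℤ)) < a ^ 2 - ((t : ℤ) ^ 2 + 1) * b ^ 2 := by
        have := abs_le.mp hab.le
        linarith [this.1]
      -- key: |a - t b| < b
      have hkey : |a - (t : ℤ) * b| < b := by
        by_contra hcon
        push_neg at hcon
        rcases le_abs.mp hcon with h1 | h1
        · -- a - t b ≥ b, i.e. a ≥ (t+1) b
          have hage : ((t : ℤ) + 1) * b ≤ a := by linarith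
          have hsq : ((t : ℤ) + 1) * b * (((t : ℤ) + 1) * b) ≤ a * a :=
            mul_le_mul hage hage (by positivity) ha0
          have hb2 : (1 : ℤ) ≤ b * b := by nlinarith
          have : 2 * (t : ℤ) ≤ a ^ 2 - ((t : ℤ) ^ 2 + 1) * b ^ 2 := by
            nlinarith [hsq, hb2, ht1]
          linarith
        · -- -(a - t b) ≥ b, i.e. a ≤ (t-1) b
          have hale : a ≤ ((t : ℤ) - 1) * b := by linarith
          have : a ^ 2 - ((t : ℤ) ^ 2 + 1) * b ^ 2 ≤ -(2 * (t : ℤ)) := by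
            nlinarith [sq_nonneg (((t:ℤ) - 1) * b - a), sq_nonneg b]
          linarith
      -- descent
      set y2 : ℤ := a - (t : ℤ) * b with hy2
      set x2 : ℤ := ((t : ℤ) ^ 2 + 1) * b - (t : ℤ) * a with hx2
      have hnew : |x2 ^ 2 - ((t : ℤ) ^ 2 + 1) * y2 ^ 2| = (n : ℤ) := by
        have hring : x2 ^ 2 - ((t : ℤ) ^ 2 + 1) * y2 ^ 2
            = -(a ^ 2 - ((t : ℤ) ^ 2 + 1) * b ^ 2) := by
          rw [hx2, hy2]; ring
        rw [hring, abs_neg, hab]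
      have hsmall : y2.natAbs ≤ Y := by
        have h1 : (y2.natAbs : ℤ) < (y.natAbs : ℤ) := by
          rw [← Int.abs_eq_natAbs, ← Int.abs_eq_natAbs]
          exact hb ▸ hkey
        have hlt' : y2.natAbs < y.natAbs := by exact_mod_cast h1
        omega
      exact ih x2 y2 hsmall hnew

/-- Davenport's lemma: if `m = t² + 1` and `|x² − m·y²| = n` has an integer solution
with `0 < n < 2t`, then `n` is a perfect square. -/
theorem davenport_square (m n t : ℕ) (hn : 0 < n) (hm : m = t ^ 2 + 1)
    (hsol : ∃ x y : ℤ, |x ^ 2 - (m : ℤ) * y ^ 2| = (n : ℤ))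
    (hlt : n < 2 * t) : ∃ k : ℤ, (n : ℤ) = k ^ 2 := by
  obtain ⟨x, y, hxy⟩ := hsol
  have hm' : (m : ℤ) = (t : ℤ) ^ 2 + 1 := by rw [hm]; push_cast; ring
  rw [hm'] at hxy
  exact davenport_aux n t hn hlt y.natAbs x y le_rfl hxy
end

section
/- Let m, n, t be natural numbers with m = t² + 2 and t ≥ 12. Suppose there exist integers x, y with |x² − m·y²| = n, and suppose that neither n nor 2n is a perfect square. Then n = 2t − 1, or n = 2t + 1, or n = 4t − 7, or n = 4t − 2, or n ≥ 4t + 2. -/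
set_option maxHeartbeats 1000000 in
/-- For `m = t² + 2`, `t ≥ 12`: if `|x² − m·y²| = n` has an integer solution and
neither `n` nor `2n` is a perfect square, then `n = 2t ± 1`, `n = 4t − 7`, `n = 4t − 2`,
or `n ≥ 4t + 2`. -/
theorem norms_t_sq_add_two (m n t : ℕ) (hm : m = t ^ 2 + 2) (ht : 12 ≤ t)
    (hsol : ∃ x y : ℤ, |x ^ 2 - (m : ℤ) * y ^ 2| = (n : ℤ))
    (hns : ¬ ∃ k : ℤ, (n : ℤ) = k ^ 2) (h2ns : ¬ ∃ k : ℤ, (2 * n : ℤ) = k ^ 2) :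
    (n : ℤ) = 2 * t - 1 ∨ (n : ℤ) = 2 * t + 1 ∨ (n : ℤ) = 4 * t - 7 ∨
      (n : ℤ) = 4 * t - 2 ∨ (4 * t + 2 : ℤ) ≤ (n : ℤ) := by
  rcases le_or_gt (4 * (t:ℤ) + 2) (n:ℤ) with hge | hlt
  · exact Or.inr (Or.inr (Or.inr (Or.inr hge)))
  have hT : (12:ℤ) ≤ (t:ℤ) := by exact_mod_cast ht
  have hm' : (m:ℤ) = (t:ℤ)^2 + 2 := by rw [hm]; push_cast; ring
  have hn1 : (n:ℤ) ≤ 4*(t:ℤ) + 1 := by linarith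
  classical
  set T : ℤ := (t:ℤ) with hTdef
  let P : ℕ → Prop := fun Y => ∃ X : ℤ, 0 ≤ X ∧ |X^2 - (m:ℤ)*(Y:ℤ)^2| = (n:ℤ)
  have hP : ∃ Y, P Y := by
    obtain ⟨x, y, hxy⟩ := hsol
    refine ⟨y.natAbs, |x|, abs_nonneg x, ?_⟩
    have h1 : ((y.natAbs : ℤ))^2 = y^2 := by
      push_cast [Int.natAbs_sq]
      exact sq_abs y
    rw [sq_abs, h1]; exact hxy
  obtain ⟨X, hX0, hXY⟩ := Nat.find_spec hP
  set Y : ℕ := Nat.find hP with hYdef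
  have hmin : ∀ z : ℕ, z < Y → ¬ P z := fun z hz => Nat.find_min hP hz
  rcases Nat.eq_zero_or_pos Y with hY0 | hYpos
  · exfalso
    apply hns
    refine ⟨X, ?_⟩
    rw [hY0] at hXY
    have h2 : |X^2| = (n:ℤ) := by simpa using hXY
    rw [← h2, abs_of_nonneg (by positivity : (0:ℤ) ≤ X^2)]
  have hY1 : (1:ℤ) ≤ (Y:ℤ) := by exact_mod_cast hYpos
  set r : ℤ := X - (Y:ℤ) * T with hrdef
  have hXr : X = (Y:ℤ)*T + r := by ring
  have hrlb : -( (Y:ℤ)*T ) ≤ r := by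
    have : 0 ≤ (Y:ℤ)*T + r := by rw [← hXr]; exact hX0
    linarith
  have habs : |r^2 + 2*(Y:ℤ)*T*r - 2*(Y:ℤ)^2| = (n:ℤ) := by
    rw [← hXY, hXr, hm']; ring_nf
  have hn0 : (0:ℤ) ≤ (n:ℤ) := by positivity
  rcases lt_trichotomy r 0 with hrneg | hr0 | hrpos
  · -- r < 0
    set q : ℤ := -r with hqdef
    have hq1 : 1 ≤ q := by omega
    have hqub : q ≤ (Y:ℤ)*T := by omega
    have hfval : r^2 + 2*(Y:ℤ)*T*r - 2*(Y:ℤ)^2 = q^2 - 2*(Y:ℤ)*T*q - 2*(Y:ℤ)^2 := by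
      rw [hqdef]; ring
    have hfneg : q^2 - 2*(Y:ℤ)*T*q - 2*(Y:ℤ)^2 < 0 := by
      nlinarith [mul_nonneg (sub_nonneg.2 hqub) (by linarith : (0:ℤ) ≤ q)]
    have hnval : (n:ℤ) = 2*(Y:ℤ)*T*q + 2*(Y:ℤ)^2 - q^2 := by
      rw [← habs, hfval, abs_of_neg hfneg]; ring
    rcases eq_or_lt_of_le hY1 with hYeq | hYge2
    · -- Y = 1
      have hYeq' : (Y:ℤ) = 1 := hYeq.symm
      rw [hYeq'] at hnval hqub
      rcases lt_trichotomy q 2 with h1 | h2 | h3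
      · have : q = 1 := by omega
        rw [this] at hnval
        exact Or.inr (Or.inl (by rw [hnval]; ring))
      · rw [h2] at hnval
        exact Or.inr (Or.inr (Or.inr (Or.inl (by rw [hnval]; ring))))
      · exfalso
        have hq3 : 3 ≤ q := by omega
        nlinarith [mul_nonneg (by linarith : (0:ℤ) ≤ q - 3) (by linarith : (0:ℤ) ≤ 2*T - 3 - q)]
    · -- Y ≥ 2
      exfalso
      have hY2 : (2:ℤ) ≤ (Y:ℤ) := by exact_mod_cast hYge2
      rcases lt_or_ge q 2 with h1 | h2
      · have : q = 1 := by omega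
        rw [this] at hnval
        nlinarith [mul_nonneg (by linarith : (0:ℤ) ≤ (Y:ℤ) - 2) (by linarith : (0:ℤ) ≤ T)]
      · nlinarith [mul_nonneg (sub_nonneg.2 hqub) (by linarith : (0:ℤ) ≤ q),
          mul_nonneg (mul_nonneg (by linarith : (0:ℤ) ≤ (Y:ℤ) - 2) (by linarith : (0:ℤ) ≤ q - 2)) (by linarith : (0:ℤ) ≤ T),
          mul_nonneg (by linarith : (0:ℤ) ≤ (Y:ℤ) - 2) (by linarith : (0:ℤ) ≤ T),
          mul_nonneg (by linarith : (0:ℤ) ≤ q - 2) (by linarith : (0:ℤ) ≤ T)]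
  · -- r = 0
    exfalso
    apply h2ns
    refine ⟨2*(Y:ℤ), ?_⟩
    have : (n:ℤ) = 2*(Y:ℤ)^2 := by
      rw [← habs, hr0]
      rw [abs_of_nonpos (by nlinarith : (0:ℤ)^2 + 2*(Y:ℤ)*T*0 - 2*(Y:ℤ)^2 ≤ 0)]
      ring
    rw [this]; ring
  · -- r ≥ 1
    have hr1 : 1 ≤ r := hrpos
    set s : ℤ := r*T - (Y:ℤ) with hsdef
    have hfval : r^2 + 2*(Y:ℤ)*T*r - 2*(Y:ℤ)^2 = r^2 + 2*(Y:ℤ)*s := by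
      rw [hsdef]; ring
    rcases lt_trichotomy s 0 with hsneg | hs0 | hspos
    · -- descent: Y > r*T
      exfalso
      have hu1 : 1 ≤ (Y:ℤ) - r*T := by omega
      set u : ℤ := (Y:ℤ) - r*T with hudef
      have huY : u < (Y:ℤ) := by nlinarith
      set u' : ℕ := u.toNat with hu'def
      have hu'cast : (u' : ℤ) = u := Int.toNat_of_nonneg (by linarith)
      have hu'Y : u' < Y := by
        have : (u':ℤ) < (Y:ℤ) := by rw [hu'cast]; exact huY
        exact_mod_cast this
      apply hmin u' hu'Y
      refine ⟨|r - T*u|, abs_nonneg _, ?_⟩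
      rw [sq_abs, hu'cast, hm']
      rw [show (r - T*u)^2 - ((T:ℤ)^2+2)*u^2 = r^2 + 2*(Y:ℤ)*T*r - 2*(Y:ℤ)^2 by
        rw [hudef]; ring]
      exact habs
    · -- s = 0 : n = r^2
      exfalso
      apply hns
      refine ⟨r, ?_⟩
      rw [← habs, hfval, hs0]
      rw [abs_of_nonneg (by positivity)]
      ring
    · -- s ≥ 1
      have hs1 : 1 ≤ s := hspos
      have hYval : (Y:ℤ) = r*T - s := by omega
      have hnval : (n:ℤ) = r^2 + 2*(Y:ℤ)*s := by
        rw [← habs, hfval, abs_of_nonneg (by nlinarith)]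
      have hYlb : T - s ≤ (Y:ℤ) := by nlinarith
      rcases lt_or_ge s 3 with hsle2 | hs3
      · -- s ∈ {1,2}
        rcases lt_or_ge r 2 with hrle1 | hr2
        · have hre : r = 1 := by omega
          rcases (by omega : s = 1 ∨ s = 2) with hse | hse
          · refine Or.inl ?_
            rw [hnval, hYval, hre, hse]; ring
          · refine Or.inr (Or.inr (Or.inl ?_))
            rw [hnval, hYval, hre, hse]; ring
        · exfalso
          rcases (by omega : s = 1 ∨ s = 2) with hse | hse
          · rw [hse] at hnval hYval; nlinarith
          · rw [hse] at hnval hYval; nlinarith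
      · rcases lt_or_ge s (T - 2) with hsmid | hsbig
        · -- 3 ≤ s ≤ T - 3
          exfalso
          nlinarith [mul_nonneg (by linarith : (0:ℤ) ≤ s - 3) (by linarith : (0:ℤ) ≤ T - 3 - s),
            mul_nonneg (by linarith : (0:ℤ) ≤ (Y:ℤ) - (T - s)) (by linarith : (0:ℤ) ≤ s)]
        · -- s ≥ T - 2 : Y ≤ 2
          have hYle2 : (Y:ℤ) ≤ 2 := by nlinarith
          rcases (by omega : (Y:ℤ) = 1 ∨ (Y:ℤ) = 2) with hYe | hYe
          · rcases lt_or_ge r 2 with hrle1 | hr2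
            · have hre : r = 1 := by omega
              rw [hre] at hYval
              have hsval : s = T - 1 := by linarith
              refine Or.inl ?_
              rw [hnval, hYe, hre, hsval]; ring
            · exfalso
              have hsval : s = r*T - 1 := by linarith
              rw [hYe, hsval] at hnval
              nlinarith [mul_nonneg (by linarith : (0:ℤ) ≤ r - 2) (by linarith : (0:ℤ) ≤ T)]
          · rcases lt_or_ge r 2 with hrle1 | hr2
            · have hre : r = 1 := by omega
              rw [hre] at hYval
              have hsval : s = T - 2 := by linarith
              refine Or.inr (Or.inr (Or.inl ?_))
              rw [hnval, hYe, hre, hsval]; ring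
            · exfalso
              have hsval : s = r*T - 2 := by linarith
              rw [hYe, hsval] at hnval
              nlinarith [mul_nonneg (by linarith : (0:ℤ) ≤ r - 2) (by linarith : (0:ℤ) ≤ T)]
end

section
/- Let q be a prime number, let l > 1 be a natural number, set t = 2lq and m = t² + 1. Then there are no integers x, y with |x² − m·y²| = 4q. -/
set_option maxHeartbeats 800000 in
/-- For a prime `q`, `l > 1`, `t = 2lq` and `m = t² + 1`, the equation
`|x² − m·y²| = 4q` has no integer solutions. -/
theorem no_solution_four_q (q l t m : ℕ) (hq : Nat.Prime q) (hl : 1 < l)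
    (ht : t = 2 * l * q) (hm : m = t ^ 2 + 1) :
    ¬ ∃ x y : ℤ, |x ^ 2 - (m : ℤ) * y ^ 2| = (4 * q : ℤ) := by
  rintro ⟨x, y, hxy⟩
  have hq2 : (2 : ℤ) ≤ (q : ℤ) := by exact_mod_cast hq.two_le
  have hl2 : (2 : ℤ) ≤ (l : ℤ) := by exact_mod_cast hl
  have htz : (t : ℤ) = 2 * l * q := by exact_mod_cast ht
  have hmz : (m : ℤ) = (t : ℤ) ^ 2 + 1 := by exact_mod_cast hm
  have ht4 : (4 : ℤ) * q ≤ (t : ℤ) := by rw [htz]; nlinarith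
  have ht0 : (1 : ℤ) ≤ (t : ℤ) := by linarith
  suffices H : ∀ Y : ℕ, ∀ x y : ℤ, y.natAbs = Y → |x ^ 2 - (m : ℤ) * y ^ 2| ≠ 4 * q by
    exact H _ x y rfl hxy
  intro Y
  induction Y using Nat.strong_induction_on with
  | _ Y IH =>
    intro x y hY hxy
    by_cases hy0 : y = 0
    · subst hy0
      have hxx : x ^ 2 = 4 * q := by
        have : |x ^ 2| = 4 * q := by simpa using hxy
        rwa [abs_of_nonneg (sq_nonneg x)] at this
      have hn : (x.natAbs : ℤ) ^ 2 = 4 * q := by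
        rw [← sq_abs x] at hxx; rw [Int.abs_eq_natAbs] at hxx; exact_mod_cast hxx
      have hn' : x.natAbs ^ 2 = 4 * q := by exact_mod_cast hn
      have h2 : 2 ∣ x.natAbs := by
        refine Nat.Prime.dvd_of_dvd_pow Nat.prime_two (n := 2) ?_
        rw [hn']; exact ⟨2 * q, by ring⟩
      obtain ⟨k, hk⟩ := h2
      have hk2 : k ^ 2 = q := by nlinarith [hn', hk]
      have hdvd : k ∣ q := ⟨k, by rw [← hk2]; ring⟩
      rcases (Nat.Prime.eq_one_or_self_of_dvd hq k hdvd) with h1 | h1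
      · subst h1; simp at hk2; omega
      · subst h1; have := hq.two_le; nlinarith [hk2]
    · set a := |x| with ha
      set b := |y| with hb
      have ha0 : 0 ≤ a := abs_nonneg x
      have hb1 : 1 ≤ b := Int.one_le_abs (by simpa using hy0)
      have hb2 : 1 ≤ b ^ 2 := by nlinarith
      have htb : 0 ≤ (t : ℤ) * (b ^ 2 - 1) := mul_nonneg (by linarith) (by linarith)
      have hab : |a ^ 2 - ((t : ℤ) ^ 2 + 1) * b ^ 2| = 4 * (q : ℤ) := by
        rw [ha, hb, sq_abs, sq_abs, ← hmz]; exact hxy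
      have h4q : (0 : ℤ) ≤ 4 * q := by linarith
      have h1lo : (0 : ℤ) ≤ ((t : ℤ) - 1) * b := mul_nonneg (by linarith) (by linarith)
      have h1hi : (0 : ℤ) ≤ ((t : ℤ) + 1) * b := mul_nonneg (by linarith) (by linarith)
      -- bounds: (t-1)*b < a < (t+1)*b
      have hbounds : ((t : ℤ) - 1) * b < a ∧ a < ((t : ℤ) + 1) * b := by
        rcases (abs_eq h4q).mp hab with h | h
        · constructor
          · by_contra hc
            push_neg at hc
            nlinarith [mul_le_mul hc hc ha0 h1lo, htb, hb2]
          · by_contra hc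
            push_neg at hc
            nlinarith [mul_le_mul hc hc h1hi ha0, htb, hb2]
        · constructor
          · by_contra hc
            push_neg at hc
            nlinarith [mul_le_mul hc hc ha0 h1lo, htb, hb2]
          · by_contra hc
            push_neg at hc
            nlinarith [mul_le_mul hc hc h1hi ha0, htb, hb2]
      obtain ⟨hlo, hhi⟩ := hbounds
      have hval : |(a * t - (m : ℤ) * b) ^ 2 - (m : ℤ) * (a - (t : ℤ) * b) ^ 2| = 4 * (q : ℤ) := by
        have h5 : (a * t - (m : ℤ) * b) ^ 2 - (m : ℤ) * (a - (t : ℤ) * b) ^ 2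
            = -(a ^ 2 - ((t : ℤ) ^ 2 + 1) * b ^ 2) := by
          rw [hmz]; ring
        rw [h5, abs_neg, hab]
      have hlt : |a - (t : ℤ) * b| < b := by
        rw [abs_lt]; constructor <;> nlinarith [hlo, hhi]
      have hlt' : (a - (t : ℤ) * b).natAbs < Y := by
        have h1 : ((a - (t : ℤ) * b).natAbs : ℤ) < (y.natAbs : ℤ) := by
          rw [← Int.abs_eq_natAbs, ← Int.abs_eq_natAbs]; exact hlt
        rw [hY] at h1
        exact_mod_cast h1
      exact IH _ hlt' _ _ rfl hval
end
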